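/- Let p_1, p_2, p_3 ∈ (0,1) with p_1 ≥ p_3 and (1−p_2)² ≥ p_2(1−p_1)(1−p_3), and set V = p_1 p_2 p_3 (1 − p_2 p_3) / (p_1 p_2 (1−p_3) + p_3 (1−p_2)). Then: (i) with r = p_3(1−p_2)/(p_3(1−p_2) + p_1 p_2(1−p_3)), for every i ∈ {1,2,3}, r·π_i + (1−r)·π̄_i ≥ V, where π_1 = p_1, π_2 = p_1 p_2, π_3 = p_1 p_2 p_3, π̄_1 = p_1 p_2 p_3, π̄_2 = p_2 p_3, π̄_3 = p_3; and (ii) with w = p_3(1 − p_1 p_2)/(p_3(1 − p_1 p_2) + p_2(p_1 − p_3)), for every expanding search σ of the cycle C_3, w·P(2,σ) + (1−w)·P(3,σ) ≤ V. (So the value of the one-target game on C_3 in this case is V, achieved by the Hider mixing over vertices 2 and 3 with probabilities proportional to p_3(1−p_1 p_2) and p_2(p_1−p_3), and by the Searcher mixing over the clockwise and anticlockwise sweeps with probabilities proportional to p_3(1−p_2) and p_1 p_2(1−p_3).) -/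

import Mathlib

set_option maxHeartbeats 1000000


/-- Adjacency in the cycle `C n` with vertex set `{0, 1, …, n}`. -/
def CycleAdj (n : ℕ) (u v : ℕ) : Prop :=
  v = u + 1 ∨ u = v + 1 ∨ (u = 0 ∧ v = n) ∨ (u = n ∧ v = 0)

/-- An expanding search of the cycle `C n`, encoded as a permutation of `Fin n`
(position `j` searches vertex `(σ j : ℕ) + 1 ∈ {1, …, n}`). -/
def IsExpandingSearch (n : ℕ) (σ : Equiv.Perm (Fin n)) : Prop :=
  ∀ j : Fin n, CycleAdj n ((σ j : ℕ) + 1) 0 ∨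
    ∃ i : Fin n, i < j ∧ CycleAdj n ((σ j : ℕ) + 1) ((σ i : ℕ) + 1)

/-- The payoff `P(v, σ)`: the product of the success probabilities of all vertices
searched up to and including the vertex `v` (encoded as `v : Fin n`, label `v + 1`). -/
def payoff (n : ℕ) (p : ℕ → ℝ) (σ : Equiv.Perm (Fin n)) (v : Fin n) : ℝ :=
  ∏ i ∈ Finset.univ.filter (fun i : Fin n => i ≤ σ.symm v), p ((σ i : ℕ) + 1)

lemma payoff_eval (p : ℕ → ℝ) (σ : Equiv.Perm (Fin 3)) (v k : Fin 3)
    (hk : σ.symm v = k) :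
    payoff 3 p σ v =
      if k = 2 then p ((σ 0 : ℕ) + 1) * p ((σ 1 : ℕ) + 1) * p ((σ 2 : ℕ) + 1)
      else if k = 1 then p ((σ 0 : ℕ) + 1) * p ((σ 1 : ℕ) + 1)
      else p ((σ 0 : ℕ) + 1) := by
  have key : ∀ k : Fin 3, Finset.univ.filter (fun i : Fin 3 => i ≤ k) =
      if k = 2 then ({0,1,2} : Finset (Fin 3)) else if k = 1 then {0,1} else {0} := by decide
  unfold payoff
  rw [hk, key k]
  fin_cases k <;> simp <;> ring

/-- Case 1 of the solution of the one-target game on `C 3`: if `p 1 ≥ p 3` and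
`(1 - p 2)² ≥ p 2 (1 - p 1)(1 - p 3)`, then the Searcher mixture `(r, 1-r)` of the
two sweeps guarantees at least `V` against each vertex, and the Hider mixture
`(w, 1-w)` on vertices `2` and `3` caps every expanding search at `V`. -/
theorem cycle3_case1 (p : ℕ → ℝ) (hp : ∀ i ∈ Finset.Icc 1 3, 0 < p i ∧ p i < 1)
    (h13 : p 3 ≤ p 1)
    (hcond : (1 - p 2) ^ 2 ≥ p 2 * (1 - p 1) * (1 - p 3))
    (V r w : ℝ)
    (hV : V = p 1 * p 2 * p 3 * (1 - p 2 * p 3) /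
      (p 1 * p 2 * (1 - p 3) + p 3 * (1 - p 2)))
    (hr : r = p 3 * (1 - p 2) / (p 3 * (1 - p 2) + p 1 * p 2 * (1 - p 3)))
    (hw : w = p 3 * (1 - p 1 * p 2) / (p 3 * (1 - p 1 * p 2) + p 2 * (p 1 - p 3))) :
    (r * p 1 + (1 - r) * (p 1 * p 2 * p 3) ≥ V ∧
     r * (p 1 * p 2) + (1 - r) * (p 2 * p 3) ≥ V ∧
     r * (p 1 * p 2 * p 3) + (1 - r) * p 3 ≥ V) ∧
    (∀ σ : Equiv.Perm (Fin 3), IsExpandingSearch 3 σ →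
      w * payoff 3 p σ ⟨1, by omega⟩ + (1 - w) * payoff 3 p σ ⟨2, by omega⟩ ≤ V) := by
  obtain ⟨h1p, h1l⟩ := hp 1 (by decide)
  obtain ⟨h2p, h2l⟩ := hp 2 (by decide)
  obtain ⟨h3p, h3l⟩ := hp 3 (by decide)
  have hx : 0 < p 1 * p 2 * (1 - p 3) := by
    apply mul_pos (mul_pos h1p h2p); linarith
  have hy : 0 < p 3 * (1 - p 2) := by apply mul_pos h3p; linarith
  have hD : 0 < p 1 * p 2 * (1 - p 3) + p 3 * (1 - p 2) := by linarith
  have h12 : p 1 * p 2 < 1 := by nlinarith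
  have h23 : p 2 * p 3 < 1 := by nlinarith
  have hWD : p 3 * (1 - p 1 * p 2) + p 2 * (p 1 - p 3) =
      p 1 * p 2 * (1 - p 3) + p 3 * (1 - p 2) := by ring
  have hD' : p 3 * (1 - p 2) + p 1 * p 2 * (1 - p 3) =
      p 1 * p 2 * (1 - p 3) + p 3 * (1 - p 2) := by ring
  have combo : ∀ A B : ℝ, r * A + (1 - r) * B =
      (p 3 * (1 - p 2) * A + p 1 * p 2 * (1 - p 3) * B) /
        (p 1 * p 2 * (1 - p 3) + p 3 * (1 - p 2)) := by
    intro A B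
    rw [hr, hD', one_sub_div hD.ne', div_mul_eq_mul_div, div_mul_eq_mul_div,
      ← add_div]
    congr 1
    ring
  have combow : ∀ A B : ℝ, w * A + (1 - w) * B =
      (p 3 * (1 - p 1 * p 2) * A + p 2 * (p 1 - p 3) * B) /
        (p 1 * p 2 * (1 - p 3) + p 3 * (1 - p 2)) := by
    intro A B
    rw [hw, hWD, one_sub_div hD.ne', div_mul_eq_mul_div, div_mul_eq_mul_div,
      ← add_div]
    congr 1
    ring
  constructor
  · refine ⟨?_, ?_, ?_⟩ <;> rw [ge_iff_le, hV, combo, div_le_div_iff₀ hD hD]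
    · have t1 : (0:ℝ) ≤ p 1 * p 3 * ((1 - p 2)^2 - p 2 * (1 - p 1) * (1 - p 3)) :=
        mul_nonneg (mul_pos h1p h3p).le (by linarith)
      have t2 : (0:ℝ) ≤ p 1 * p 3 *
          (p 2 * (1 - p 1) * (1 - p 3) * (1 - p 2)) := by
        have : (0:ℝ) ≤ p 2 * (1 - p 1) * (1 - p 3) * (1 - p 2) := by
          apply mul_nonneg
          apply mul_nonneg
          apply mul_nonneg h2p.le
          all_goals linarith
        exact mul_nonneg (mul_pos h1p h3p).le this
      have hkey1 : p 1 * p 2 * p 3 * (1 - p 2 * p 3) ≤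
          p 3 * (1 - p 2) * p 1 + p 1 * p 2 * (1 - p 3) * (p 1 * p 2 * p 3) := by
        nlinarith [t1, t2]
      nlinarith [mul_le_mul_of_nonneg_right hkey1 hD.le]
    · apply le_of_eq; ring
    · apply le_of_eq; ring
  · intro σ hσ
    have hfin : ∀ x : Fin 3, x = 0 ∨ x = 1 ∨ x = 2 := by decide
    have hinj := σ.injective
    have h0 : σ 0 = 0 ∨ σ 0 = 2 := by
      rcases hfin (σ 0) with h | h | h
      · exact Or.inl h
      · exfalso
        rcases hσ 0 with hc | ⟨i, hi, _⟩
        · rw [h] at hc; simp [CycleAdj] at hc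
        · exact absurd hi (by simp)
      · exact Or.inr h
    show w * payoff 3 p σ 1 + (1 - w) * payoff 3 p σ 2 ≤ V
    -- case analysis on the permutation
    rcases h0 with h0 | h0
    · rcases hfin (σ 1) with h1 | h1 | h1
      · exact absurd (hinj (h0.trans h1.symm)) (by decide)
      · -- σ = (0,1,2): sweep 1,2,3
        have s1 : σ.symm 1 = 1 := by
          rw [Equiv.symm_apply_eq, h1]
        have h2 : σ 2 = 2 := by
          rcases hfin (σ 2) with h | h | h
          · exact absurd (hinj (h0.trans h.symm)) (by decide)
          · exact absurd (hinj (h1.trans h.symm)) (by decide)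
          · exact h
        have s2 : σ.symm 2 = 2 := by
          rw [Equiv.symm_apply_eq, h2]
        rw [payoff_eval p σ _ _ s1, payoff_eval p σ _ _ s2, h0, h1, h2]
        norm_num [Fin.ext_iff]
        rw [combow, hV, div_le_div_iff₀ hD hD]
        apply le_of_eq; ring
      · -- σ = (0,2,1): sweep 1,3,2
        have h2 : σ 2 = 1 := by
          rcases hfin (σ 2) with h | h | h
          · exact absurd (hinj (h0.trans h.symm)) (by decide)
          · exact h
          · exact absurd (hinj (h1.trans h.symm)) (by decide)
        have s1 : σ.symm 1 = 2 := by
          rw [Equiv.symm_apply_eq, h2]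
        have s2 : σ.symm 2 = 1 := by
          rw [Equiv.symm_apply_eq, h1]
        rw [payoff_eval p σ _ _ s1, payoff_eval p σ _ _ s2, h0, h1, h2]
        norm_num [Fin.ext_iff]
        rw [combow, hV, div_le_div_iff₀ hD hD]
        have hkey : p 3 * (1 - p 1 * p 2) * (p 1 * (p 3 * p 2)) +
            p 2 * (p 1 - p 3) * (p 1 * p 3) ≤ p 1 * p 2 * p 3 * (1 - p 2 * p 3) := by
          nlinarith [mul_nonneg (mul_nonneg (mul_nonneg (mul_pos h1p h2p).le
            (mul_pos h3p h1p).le) (by linarith : (0:ℝ) ≤ 1 - p 1))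
            (by linarith : (0:ℝ) ≤ 1 - p 2 * p 3)]
        nlinarith [mul_le_mul_of_nonneg_right hkey hD.le]
    · rcases hfin (σ 1) with h1 | h1 | h1
      · -- σ = (2,0,1): sweep 3,1,2
        have h2 : σ 2 = 1 := by
          rcases hfin (σ 2) with h | h | h
          · exact absurd (hinj (h1.trans h.symm)) (by decide)
          · exact h
          · exact absurd (hinj (h0.trans h.symm)) (by decide)
        have s1 : σ.symm 1 = 2 := by
          rw [Equiv.symm_apply_eq, h2]
        have s2 : σ.symm 2 = 0 := by
          rw [Equiv.symm_apply_eq, h0]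
        rw [payoff_eval p σ _ _ s1, payoff_eval p σ _ _ s2, h0, h1, h2]
        norm_num [Fin.ext_iff]
        rw [combow, hV, div_le_div_iff₀ hD hD]
        have hkey : p 3 * (1 - p 1 * p 2) * (p 3 * p 1 * p 2) +
            p 2 * (p 1 - p 3) * p 3 ≤ p 1 * p 2 * p 3 * (1 - p 2 * p 3) := by
          nlinarith [mul_nonneg (mul_nonneg (mul_pos h2p
            (mul_pos h3p h3p)).le (by linarith : (0:ℝ) ≤ 1 - p 1))
            (by linarith : (0:ℝ) ≤ 1 - p 1 * p 2)]
        nlinarith [mul_le_mul_of_nonneg_right hkey hD.le]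
      · -- σ = (2,1,0): sweep 3,2,1
        have h2 : σ 2 = 0 := by
          rcases hfin (σ 2) with h | h | h
          · exact h
          · exact absurd (hinj (h1.trans h.symm)) (by decide)
          · exact absurd (hinj (h0.trans h.symm)) (by decide)
        have s1 : σ.symm 1 = 1 := by
          rw [Equiv.symm_apply_eq, h1]
        have s2 : σ.symm 2 = 0 := by
          rw [Equiv.symm_apply_eq, h0]
        rw [payoff_eval p σ _ _ s1, payoff_eval p σ _ _ s2, h0, h1, h2]
        norm_num [Fin.ext_iff]
        rw [combow, hV, div_le_div_iff₀ hD hD]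
        apply le_of_eq; ring
      · exact absurd (hinj (h0.trans h1.symm)) (by decide)
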